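/- Assume: (A1) σ : ℝ×[0,T] → ℝ is bounded, bounded away from zero and Lipschitz continuous; (A2) β : ∂_p((0,+∞)×[0,T)) → ℝ is bounded and Lipschitz continuous; (A3) H : ℝ×ℝ×ℝ×[0,T] → ℝ is Lipschitz continuous on compact subsets and there is K>0 with |H(p,u,x,t)| ≤ K(1+|u|+|p|) and |H(p,u,x,t)−H(p̄,ū,x,t)| ≤ K(|u−ū|+|p−p̄|); (A4') there exist a bounded classical solution w of D_t w + (σ²(x,t)/2)·D_x² w + 1 = 0 on (0,+∞)×[0,T) with w = 0 on the parabolic boundary, and L>0 with |w(x,t) − w(x̄,t)| ≤ L|x−x̄| for all x,x̄ ≥ 0, t ∈ [0,T]. If u₁ and u₂ are two classical solutions of D_t u + (σ²(x,t)/2)·D_x² u + H(D_x u, u, x, t) = 0 on (0,+∞)×[0,T) with u = β on the parabolic boundary, both belonging to the class C^{1+,0+}_{b,loc}, then u₁ ≡ u₂ on [0,+∞)×[0,T]. -/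

import Mathlib

open Set

/-- Partial derivative in the space variable `x`. -/
noncomputable def Dx (u : ℝ → ℝ → ℝ) (x t : ℝ) : ℝ := deriv (fun y => u y t) x

/-- Second partial derivative in the space variable `x`. -/
noncomputable def Dxx (u : ℝ → ℝ → ℝ) (x t : ℝ) : ℝ := deriv (fun y => Dx u y t) x

/-- Partial derivative in the time variable `t`. -/
noncomputable def Dt (u : ℝ → ℝ → ℝ) (x t : ℝ) : ℝ := deriv (fun s => u x s) t

/-- The parabolic boundary ∂ₚ((0,∞)×[0,T)) = ([0,∞)×{T}) ∪ ({0}×[0,T]). -/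
def parabBdry (T : ℝ) : Set (ℝ × ℝ) := (Ici 0 ×ˢ {T}) ∪ ({0} ×ˢ Icc 0 T)

/-- `u ∈ C^{2,1}((0,∞)×[0,T)) ∩ C([0,∞)×[0,T])`: continuity on the closed domain, and
existence plus continuity of `D_x u`, `D_x² u`, `D_t u` on `(0,∞)×[0,T)`. -/
def RegC21 (T : ℝ) (u : ℝ → ℝ → ℝ) : Prop :=
  ContinuousOn (fun p : ℝ × ℝ => u p.1 p.2) (Ici 0 ×ˢ Icc 0 T) ∧
  (∀ x ∈ Ioi (0:ℝ), ∀ t ∈ Ico (0:ℝ) T,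
    DifferentiableAt ℝ (fun y => u y t) x ∧
    DifferentiableAt ℝ (fun y => Dx u y t) x ∧
    DifferentiableAt ℝ (fun s => u x s) t) ∧
  ContinuousOn (fun p : ℝ × ℝ => Dx u p.1 p.2) (Ioi 0 ×ˢ Ico 0 T) ∧
  ContinuousOn (fun p : ℝ × ℝ => Dxx u p.1 p.2) (Ioi 0 ×ˢ Ico 0 T) ∧
  ContinuousOn (fun p : ℝ × ℝ => Dt u p.1 p.2) (Ioi 0 ×ˢ Ico 0 T)

/-- (A1): `σ` is bounded, bounded away from zero and Lipschitz continuous on `ℝ×[0,T]`. -/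
def CondA1 (T : ℝ) (σ : ℝ → ℝ → ℝ) : Prop :=
  (∃ C, ∀ x : ℝ, ∀ t ∈ Icc (0:ℝ) T, |σ x t| ≤ C) ∧
  (∃ m > 0, ∀ x : ℝ, ∀ t ∈ Icc (0:ℝ) T, m ≤ |σ x t|) ∧
  (∃ L > 0, ∀ x x' : ℝ, ∀ t ∈ Icc (0:ℝ) T, ∀ t' ∈ Icc (0:ℝ) T,
    |σ x t - σ x' t'| ≤ L * (|x - x'| + |t - t'|))

/-- (A2): `β` is bounded and Lipschitz continuous on the parabolic boundary. -/
def CondA2 (T : ℝ) (β : ℝ → ℝ → ℝ) : Prop :=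
  (∃ C, ∀ p ∈ parabBdry T, |β p.1 p.2| ≤ C) ∧
  (∃ L > 0, ∀ p ∈ parabBdry T, ∀ q ∈ parabBdry T,
    |β p.1 p.2 - β q.1 q.2| ≤ L * (|p.1 - q.1| + |p.2 - q.2|))

/-- (A3): `H` is Lipschitz continuous on compact subsets of `ℝ³×[0,T]`, has linear growth
in `(p,u)` and is uniformly Lipschitz in `(p,u)`. -/
def CondA3 (T : ℝ) (H : ℝ → ℝ → ℝ → ℝ → ℝ) : Prop :=
  (∀ U : Set (ℝ × ℝ × ℝ × ℝ), IsCompact U → (∀ q ∈ U, q.2.2.2 ∈ Icc (0:ℝ) T) →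
    ∃ L > 0, ∀ q ∈ U, ∀ q' ∈ U,
      |H q.1 q.2.1 q.2.2.1 q.2.2.2 - H q'.1 q'.2.1 q'.2.2.1 q'.2.2.2| ≤
        L * (|q.1 - q'.1| + |q.2.1 - q'.2.1| + |q.2.2.1 - q'.2.2.1| + |q.2.2.2 - q'.2.2.2|)) ∧
  (∃ K > 0,
    (∀ p u x : ℝ, ∀ t ∈ Icc (0:ℝ) T, |H p u x t| ≤ K * (1 + |u| + |p|)) ∧
    (∀ p p' u u' x : ℝ, ∀ t ∈ Icc (0:ℝ) T,
      |H p u x t - H p' u' x t| ≤ K * (|u - u'| + |p - p'|)))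

/-- (A4'): there is a bounded classical solution `w` of
`D_t w + (σ²/2)·D_x² w + 1 = 0` on `(0,∞)×[0,T)` vanishing on the parabolic boundary,
which is Lipschitz continuous in `x` uniformly in `t`. -/
def CondA4' (T : ℝ) (σ : ℝ → ℝ → ℝ) : Prop :=
  ∃ w : ℝ → ℝ → ℝ,
    RegC21 T w ∧
    (∃ C, ∀ x ∈ Ici (0:ℝ), ∀ t ∈ Icc (0:ℝ) T, |w x t| ≤ C) ∧
    (∀ x ∈ Ioi (0:ℝ), ∀ t ∈ Ico (0:ℝ) T,
      Dt w x t + σ x t ^ 2 / 2 * Dxx w x t + 1 = 0) ∧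
    (∀ p ∈ parabBdry T, w p.1 p.2 = 0) ∧
    (∃ L > 0, ∀ x ∈ Ici (0:ℝ), ∀ x' ∈ Ici (0:ℝ), ∀ t ∈ Icc (0:ℝ) T,
      |w x t - w x' t| ≤ L * |x - x'|)


/-- Hölder continuity on compact subsets of a set `O ⊆ ℝ²`. -/
def HolderOnCompacts (O : Set (ℝ × ℝ)) (f : ℝ → ℝ → ℝ) : Prop :=
  ∀ U ⊆ O, IsCompact U → ∃ L > 0, ∃ l ∈ Ioc (0:ℝ) 1,
    ∀ p ∈ U, ∀ q ∈ U, |f p.1 p.2 - f q.1 q.2| ≤ L * ‖p - q‖ ^ l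

/-- Membership in `C_b^{1,0}`: `u` is bounded and continuous on `[0,∞)×[0,T)` and
`D_x u` exists, is continuous and bounded on `(0,∞)×[0,T)`. -/
def MemCb10 (T : ℝ) (u : ℝ → ℝ → ℝ) : Prop :=
  ContinuousOn (fun p : ℝ × ℝ => u p.1 p.2) (Ici 0 ×ˢ Ico 0 T) ∧
  (∃ C, ∀ x ∈ Ici (0:ℝ), ∀ t ∈ Ico (0:ℝ) T, |u x t| ≤ C) ∧
  (∀ x ∈ Ioi (0:ℝ), ∀ t ∈ Ico (0:ℝ) T, DifferentiableAt ℝ (fun y => u y t) x) ∧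
  ContinuousOn (fun p : ℝ × ℝ => Dx u p.1 p.2) (Ioi 0 ×ˢ Ico 0 T) ∧
  (∃ C, ∀ x ∈ Ioi (0:ℝ), ∀ t ∈ Ico (0:ℝ) T, |Dx u x t| ≤ C)

/-- Membership in `C^{1+,0+}_{b,loc}`: `u ∈ C_b^{1,0}` and both `u` and `D_x u` are
Hölder continuous on compact subsets of `(0,∞)×[0,T)`. -/
def MemC1plus (T : ℝ) (u : ℝ → ℝ → ℝ) : Prop :=
  MemCb10 T u ∧
  HolderOnCompacts (Ioi 0 ×ˢ Ico 0 T) u ∧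
  HolderOnCompacts (Ioi 0 ×ˢ Ico 0 T) (Dx u)

open Filter Topology

lemma aux_time {f : ℝ → ℝ} {t T : ℝ} (hd : DifferentiableAt ℝ f t) (htT : t < T)
    (hle : ∀ s ∈ Ioo t T, f s ≤ f t) : deriv f t ≤ 0 := by
  have h := hd.hasDerivAt
  rw [hasDerivAt_iff_tendsto_slope] at h
  have h2 : Tendsto (slope f t) (𝓝[>] t) (𝓝 (deriv f t)) :=
    h.mono_left (nhdsWithin_mono _ fun y hy => ne_of_gt hy)
  refine le_of_tendsto h2 ?_
  filter_upwards [Ioo_mem_nhdsGT_of_mem ⟨le_refl t, htT⟩] with s hs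
  rw [slope_def_field]
  exact div_nonpos_of_nonpos_of_nonneg (sub_nonpos.2 (hle s hs)) (sub_nonneg.2 hs.1.le)

lemma aux_second {f g : ℝ → ℝ} {x : ℝ} (hmax : IsLocalMax f x)
    (hfg : ∀ᶠ y in 𝓝 x, HasDerivAt f (g y) y)
    (hg : DifferentiableAt ℝ g x) : g x = 0 ∧ deriv g x ≤ 0 := by
  have hgx : g x = 0 := hmax.hasDerivAt_eq_zero hfg.self_of_nhds
  refine ⟨hgx, ?_⟩
  by_contra hc
  push_neg at hc
  have hslope := hg.hasDerivAt
  rw [hasDerivAt_iff_tendsto_slope] at hslope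
  have h2 : Tendsto (slope g x) (𝓝[>] x) (𝓝 (deriv g x)) :=
    hslope.mono_left (nhdsWithin_mono _ fun y hy => ne_of_gt hy)
  have h3 : ∀ᶠ y in 𝓝[>] x, 0 < slope g x y := h2.eventually (eventually_gt_nhds hc)
  have hmax' : ∀ᶠ y in 𝓝 x, f y ≤ f x := hmax
  have hcomb : ∀ᶠ y in 𝓝[>] x, 0 < g y ∧ HasDerivAt f (g y) y ∧ f y ≤ f x := by
    filter_upwards [h3, self_mem_nhdsWithin, (hfg.and hmax').filter_mono nhdsWithin_le_nhds]
      with y hy hy' hy''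
    refine ⟨?_, hy''.1, hy''.2⟩
    have hxy : 0 < y - x := sub_pos.2 hy'
    rw [slope_def_field, hgx, sub_zero] at hy
    have := mul_pos hy hxy
    rw [div_mul_cancel₀ _ (ne_of_gt hxy)] at this
    exact this
  rw [eventually_iff, mem_nhdsGT_iff_exists_Ioc_subset] at hcomb
  obtain ⟨u, hu, hsub⟩ := hcomb
  have hmono : StrictMonoOn f (Icc x u) := by
    apply strictMonoOn_of_deriv_pos (convex_Icc x u)
    · intro y hy
      rcases eq_or_lt_of_le hy.1 with h | h
      · subst h
        exact hfg.self_of_nhds.differentiableAt.continuousAt.continuousWithinAt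
      · exact ((hsub ⟨h, hy.2⟩).2.1.differentiableAt.continuousAt).continuousWithinAt
    · intro y hy
      rw [interior_Icc] at hy
      rw [(hsub ⟨hy.1, hy.2.le⟩).2.1.deriv]
      exact (hsub ⟨hy.1, hy.2.le⟩).1
  have h5 : f x < f u := hmono ⟨le_refl x, hu.le⟩ ⟨hu.le, le_refl u⟩ hu
  have h6 : f u ≤ f x := (hsub ⟨hu, le_refl u⟩).2.2
  linarith

set_option maxHeartbeats 1000000 in
lemma one_sided (T : ℝ) (hT : 0 < T) (σ : ℝ → ℝ → ℝ) (H : ℝ → ℝ → ℝ → ℝ → ℝ)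
    {K : ℝ} (hK : 0 < K)
    (hHK : ∀ p p' u u' x : ℝ, ∀ t ∈ Icc (0:ℝ) T,
      |H p u x t - H p' u' x t| ≤ K * (|u - u'| + |p - p'|))
    (u₁ u₂ : ℝ → ℝ → ℝ)
    (hreg₁ : RegC21 T u₁) (hreg₂ : RegC21 T u₂)
    (hpde₁ : ∀ x ∈ Ioi (0:ℝ), ∀ t ∈ Ico (0:ℝ) T,
      Dt u₁ x t + σ x t ^ 2 / 2 * Dxx u₁ x t + H (Dx u₁ x t) (u₁ x t) x t = 0)
    (hpde₂ : ∀ x ∈ Ioi (0:ℝ), ∀ t ∈ Ico (0:ℝ) T,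
      Dt u₂ x t + σ x t ^ 2 / 2 * Dxx u₂ x t + H (Dx u₂ x t) (u₂ x t) x t = 0)
    (hzero : ∀ p ∈ parabBdry T, u₁ p.1 p.2 = u₂ p.1 p.2)
    {M : ℝ} (hM : ∀ x ∈ Ici (0:ℝ), ∀ t ∈ Icc (0:ℝ) T, |u₁ x t - u₂ x t| ≤ M) :
    ∀ x ∈ Ici (0:ℝ), ∀ t ∈ Icc (0:ℝ) T, u₁ x t ≤ u₂ x t := by
  intro x hx t ht
  have hexpt : (0:ℝ) < Real.exp (2*K*t) := Real.exp_pos _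
  suffices key : ∀ ε > 0, (u₁ x t - u₂ x t) * Real.exp (2*K*t) ≤ ε * (1+x) by
    have h1x : (0:ℝ) < 1 + x := by have hx' : (0:ℝ) ≤ x := hx; linarith
    have hA : (u₁ x t - u₂ x t) * Real.exp (2*K*t) ≤ 0 := by
      by_contra h
      push_neg at h
      have hk := key (((u₁ x t - u₂ x t) * Real.exp (2*K*t))/(2*(1+x)))
        (by positivity)
      have h2 : (((u₁ x t - u₂ x t) * Real.exp (2*K*t))/(2*(1+x)))*(1+x)
          = ((u₁ x t - u₂ x t) * Real.exp (2*K*t))/2 := by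
        field_simp
      rw [h2] at hk
      linarith
    by_contra hlt
    push_neg at hlt
    have hcon : 0 < (u₁ x t - u₂ x t) * Real.exp (2*K*t) := mul_pos (by linarith) hexpt
    linarith
  intro ε hε
  set R := max x (M * Real.exp (2*K*T) / ε) with hRdef
  have hxR : x ≤ R := le_max_left _ _
  have hRM : M * Real.exp (2*K*T) ≤ ε * R := by
    have h1 : M * Real.exp (2*K*T)/ε ≤ R := le_max_right _ _
    calc M * Real.exp (2*K*T) = ε * (M * Real.exp (2*K*T)/ε) := by field_simp
    _ ≤ ε * R := mul_le_mul_of_nonneg_left h1 hε.le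
  have hR0 : (0:ℝ) ≤ R := le_trans hx hxR
  have hQc : IsCompact (Icc (0:ℝ) R ×ˢ Icc (0:ℝ) T) := isCompact_Icc.prod isCompact_Icc
  have hQne : (Icc (0:ℝ) R ×ˢ Icc (0:ℝ) T).Nonempty :=
    ⟨(0,0), ⟨⟨le_refl 0, hR0⟩, ⟨le_refl 0, hT.le⟩⟩⟩
  have hQsub : Icc (0:ℝ) R ×ˢ Icc (0:ℝ) T ⊆ Ici 0 ×ˢ Icc 0 T :=
    prod_mono Icc_subset_Ici_self subset_rfl
  have hζc : ContinuousOn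
      (fun p : ℝ × ℝ => (u₁ p.1 p.2 - u₂ p.1 p.2) * Real.exp (2*K*p.2) - ε * (1 + p.1))
      (Icc (0:ℝ) R ×ˢ Icc (0:ℝ) T) := by
    apply ContinuousOn.sub
    · exact ((hreg₁.1.mono hQsub).sub (hreg₂.1.mono hQsub)).mul
        ((Real.continuous_exp.comp (continuous_const.mul continuous_snd)).continuousOn)
    · exact (continuous_const.mul (continuous_const.add continuous_fst)).continuousOn
  obtain ⟨⟨x₀, t₀⟩, hp₀Q, hp₀max⟩ := hQc.exists_isMaxOn hQne hζc
  have hx₀mem : (0:ℝ) ≤ x₀ := hp₀Q.1.1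
  have ht₀mem : t₀ ∈ Icc (0:ℝ) T := hp₀Q.2
  have hmax0 : (u₁ x₀ t₀ - u₂ x₀ t₀) * Real.exp (2*K*t₀) - ε * (1 + x₀) ≤ 0 := by
    by_contra hpos
    push_neg at hpos
    -- x₀ ≠ 0
    have hx₀0 : x₀ ≠ 0 := by
      rintro rfl
      have hb : ((0:ℝ), t₀) ∈ parabBdry T := Or.inr ⟨rfl, ht₀mem⟩
      have he := hzero _ hb
      simp only at he
      rw [he] at hpos
      simp only [sub_self, zero_mul, zero_sub] at hpos
      nlinarith
    -- t₀ ≠ T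
    have ht₀T : t₀ ≠ T := by
      intro hteq
      have hb : (x₀, t₀) ∈ parabBdry T := Or.inl ⟨hx₀mem, hteq⟩
      have he := hzero _ hb
      simp only at he
      rw [he] at hpos
      simp only [sub_self, zero_mul, zero_sub] at hpos
      nlinarith
    have hx₀pos : 0 < x₀ := lt_of_le_of_ne hx₀mem (Ne.symm hx₀0)
    have ht₀ : t₀ ∈ Ico (0:ℝ) T := ⟨ht₀mem.1, lt_of_le_of_ne ht₀mem.2 ht₀T⟩
    -- x₀ ≠ R
    have hx₀R : x₀ ≠ R := by
      intro h
      have habs := hM x₀ hx₀mem t₀ ht₀mem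
      have hM0 : 0 ≤ M := le_trans (abs_nonneg _) habs
      have hEle : Real.exp (2*K*t₀) ≤ Real.exp (2*K*T) :=
        Real.exp_le_exp.2 (mul_le_mul_of_nonneg_left ht₀mem.2 (by linarith))
      have hVE : (u₁ x₀ t₀ - u₂ x₀ t₀) * Real.exp (2*K*t₀) ≤ M * Real.exp (2*K*T) := by
        calc (u₁ x₀ t₀ - u₂ x₀ t₀) * Real.exp (2*K*t₀)
            ≤ |u₁ x₀ t₀ - u₂ x₀ t₀| * Real.exp (2*K*t₀) :=
              mul_le_mul_of_nonneg_right (le_abs_self _) (Real.exp_pos _).le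
          _ ≤ M * Real.exp (2*K*t₀) := mul_le_mul_of_nonneg_right habs (Real.exp_pos _).le
          _ ≤ M * Real.exp (2*K*T) := mul_le_mul_of_nonneg_left hEle hM0
      rw [h] at hpos
      rw [h] at hVE
      linarith [hVE, hRM, hε]
    have hx₀ltR : x₀ < R := lt_of_le_of_ne hp₀Q.1.2 hx₀R
    have hE : (0:ℝ) < Real.exp (2*K*t₀) := Real.exp_pos _
    -- space derivative analysis
    have hfg : ∀ y ∈ Ioi (0:ℝ),
        HasDerivAt (fun y => (u₁ y t₀ - u₂ y t₀) * Real.exp (2*K*t₀) - ε * (1 + y))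
          ((Dx u₁ y t₀ - Dx u₂ y t₀) * Real.exp (2*K*t₀) - ε) y := by
      intro y hy
      have h1 : HasDerivAt (fun z => u₁ z t₀) (Dx u₁ y t₀) y :=
        (hreg₁.2.1 y hy t₀ ht₀).1.hasDerivAt
      have h2 : HasDerivAt (fun z => u₂ z t₀) (Dx u₂ y t₀) y :=
        (hreg₂.2.1 y hy t₀ ht₀).1.hasDerivAt
      have h3 : HasDerivAt (fun z : ℝ => ε * (1 + z)) ε y := by
        simpa [id_eq, mul_one] using ((hasDerivAt_id y).const_add (1:ℝ)).const_mul ε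
      exact ((h1.sub h2).mul_const (Real.exp (2*K*t₀))).sub h3
    have hfg' : ∀ᶠ y in 𝓝 x₀,
        HasDerivAt (fun y => (u₁ y t₀ - u₂ y t₀) * Real.exp (2*K*t₀) - ε * (1 + y))
          ((Dx u₁ y t₀ - Dx u₂ y t₀) * Real.exp (2*K*t₀) - ε) y :=
      Filter.eventually_of_mem (isOpen_Ioi.mem_nhds hx₀pos) hfg
    have hgderiv : HasDerivAt
        (fun y => (Dx u₁ y t₀ - Dx u₂ y t₀) * Real.exp (2*K*t₀) - ε)
        ((Dxx u₁ x₀ t₀ - Dxx u₂ x₀ t₀) * Real.exp (2*K*t₀)) x₀ := by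
      have d1 : HasDerivAt (fun y => Dx u₁ y t₀) (Dxx u₁ x₀ t₀) x₀ :=
        (hreg₁.2.1 x₀ hx₀pos t₀ ht₀).2.1.hasDerivAt
      have d2 : HasDerivAt (fun y => Dx u₂ y t₀) (Dxx u₂ x₀ t₀) x₀ :=
        (hreg₂.2.1 x₀ hx₀pos t₀ ht₀).2.1.hasDerivAt
      exact ((d1.sub d2).mul_const (Real.exp (2*K*t₀))).sub_const ε
    have hlocmax : IsLocalMax
        (fun y => (u₁ y t₀ - u₂ y t₀) * Real.exp (2*K*t₀) - ε * (1 + y)) x₀ :=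
      Filter.eventually_of_mem (Icc_mem_nhds hx₀pos hx₀ltR)
        (fun y hy => hp₀max (⟨hy, ht₀mem⟩ : (y, t₀) ∈ Icc (0:ℝ) R ×ˢ Icc (0:ℝ) T))
    obtain ⟨hg0, hg'le⟩ := aux_second hlocmax hfg' hgderiv.differentiableAt
    rw [hgderiv.deriv] at hg'le
    have hD2 : Dxx u₁ x₀ t₀ - Dxx u₂ x₀ t₀ ≤ 0 := by
      rcases mul_nonpos_iff.mp hg'le with ⟨h1, h2⟩ | ⟨h1, h2⟩ <;> nlinarith [hE]
    have hP : (Dx u₁ x₀ t₀ - Dx u₂ x₀ t₀) * Real.exp (2*K*t₀) = ε := by linarith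
    -- time derivative analysis
    have hGd : HasDerivAt (fun s => (u₁ x₀ s - u₂ x₀ s) * Real.exp (2*K*s) - ε * (1 + x₀))
        ((Dt u₁ x₀ t₀ - Dt u₂ x₀ t₀) * Real.exp (2*K*t₀)
          + (u₁ x₀ t₀ - u₂ x₀ t₀) * (Real.exp (2*K*t₀) * (2*K))) t₀ := by
      have h1 : HasDerivAt (fun s => u₁ x₀ s) (Dt u₁ x₀ t₀) t₀ :=
        (hreg₁.2.1 x₀ hx₀pos t₀ ht₀).2.2.hasDerivAt
      have h2 : HasDerivAt (fun s => u₂ x₀ s) (Dt u₂ x₀ t₀) t₀ :=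
        (hreg₂.2.1 x₀ hx₀pos t₀ ht₀).2.2.hasDerivAt
      have hin : HasDerivAt (fun s : ℝ => 2*K*s) (2*K) t₀ := by
        simpa using (hasDerivAt_id t₀).const_mul (2*K)
      exact ((h1.sub h2).mul hin.exp).sub_const (ε * (1 + x₀))
    have hGle : deriv (fun s => (u₁ x₀ s - u₂ x₀ s) * Real.exp (2*K*s) - ε * (1 + x₀)) t₀
        ≤ 0 := by
      apply aux_time hGd.differentiableAt ht₀.2
      intro s hs
      exact hp₀max (⟨hp₀Q.1, ⟨le_trans ht₀.1 hs.1.le, hs.2.le⟩⟩ :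
        (x₀, s) ∈ Icc (0:ℝ) R ×ˢ Icc (0:ℝ) T)
    rw [hGd.deriv] at hGle
    -- PDE and Lipschitz
    have e1 := hpde₁ x₀ hx₀pos t₀ ht₀
    have e2 := hpde₂ x₀ hx₀pos t₀ ht₀
    have hH := hHK (Dx u₁ x₀ t₀) (Dx u₂ x₀ t₀) (u₁ x₀ t₀) (u₂ x₀ t₀) x₀ t₀ ht₀mem
    have h1x₀ : (0:ℝ) < 1 + x₀ := by linarith
    have hεx : 0 < ε * (1 + x₀) := mul_pos hε h1x₀
    have hVE : 0 < (u₁ x₀ t₀ - u₂ x₀ t₀) * Real.exp (2*K*t₀) := by linarith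
    have hVpos : 0 < u₁ x₀ t₀ - u₂ x₀ t₀ := by
      by_contra h
      push_neg at h
      nlinarith [mul_nonpos_of_nonpos_of_nonneg h hE.le]
    have hPpos : 0 < Dx u₁ x₀ t₀ - Dx u₂ x₀ t₀ := by
      by_contra h
      push_neg at h
      nlinarith [mul_nonpos_of_nonpos_of_nonneg h hE.le]
    rw [abs_of_pos hVpos, abs_of_pos hPpos] at hH
    have hHle : H (Dx u₁ x₀ t₀) (u₁ x₀ t₀) x₀ t₀ - H (Dx u₂ x₀ t₀) (u₂ x₀ t₀) x₀ t₀
        ≤ K * ((u₁ x₀ t₀ - u₂ x₀ t₀) + (Dx u₁ x₀ t₀ - Dx u₂ x₀ t₀)) := by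
      have h5 := le_trans (le_abs_self _) hH
      linarith
    have ha : 0 ≤ σ x₀ t₀ ^ 2 / 2 := by positivity
    have heq : Dt u₁ x₀ t₀ - Dt u₂ x₀ t₀
        = -(σ x₀ t₀ ^ 2 / 2 * (Dxx u₁ x₀ t₀ - Dxx u₂ x₀ t₀))
          - (H (Dx u₁ x₀ t₀) (u₁ x₀ t₀) x₀ t₀ - H (Dx u₂ x₀ t₀) (u₂ x₀ t₀) x₀ t₀) := by
      linarith only [e1, e2]
    have heqE : (Dt u₁ x₀ t₀ - Dt u₂ x₀ t₀) * Real.exp (2*K*t₀)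
        = (-(σ x₀ t₀ ^ 2 / 2 * (Dxx u₁ x₀ t₀ - Dxx u₂ x₀ t₀))
          - (H (Dx u₁ x₀ t₀) (u₁ x₀ t₀) x₀ t₀ - H (Dx u₂ x₀ t₀) (u₂ x₀ t₀) x₀ t₀))
          * Real.exp (2*K*t₀) := by
      rw [heq]
    rw [heqE] at hGle
    have hprod : σ x₀ t₀ ^ 2 / 2 * (Dxx u₁ x₀ t₀ - Dxx u₂ x₀ t₀) * Real.exp (2*K*t₀) ≤ 0 :=
      mul_nonpos_of_nonpos_of_nonneg (mul_nonpos_of_nonneg_of_nonpos ha hD2) hE.le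
    have hHE : (H (Dx u₁ x₀ t₀) (u₁ x₀ t₀) x₀ t₀ - H (Dx u₂ x₀ t₀) (u₂ x₀ t₀) x₀ t₀)
          * Real.exp (2*K*t₀)
        ≤ K * ((u₁ x₀ t₀ - u₂ x₀ t₀) + (Dx u₁ x₀ t₀ - Dx u₂ x₀ t₀)) * Real.exp (2*K*t₀) :=
      mul_le_mul_of_nonneg_right hHle hE.le
    have hKPE : K * ((Dx u₁ x₀ t₀ - Dx u₂ x₀ t₀) * Real.exp (2*K*t₀)) = K * ε := by
      rw [hP]
    have hKVE : K * (ε * (1 + x₀)) < K * ((u₁ x₀ t₀ - u₂ x₀ t₀) * Real.exp (2*K*t₀)) := by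
      apply mul_lt_mul_of_pos_left _ hK
      linarith
    have hfinpos : 0 < K * ε * x₀ := by positivity
    linarith only [hGle, hprod, hHE, hKPE, hKVE, hfinpos]
  -- conclude
  have hxtQ : (x, t) ∈ Icc (0:ℝ) R ×ˢ Icc (0:ℝ) T := ⟨⟨hx, hxR⟩, ht⟩
  have hfin := hp₀max hxtQ
  simp only [Set.mem_setOf_eq] at hfin
  linarith


/-- Under (A1)–(A3) and (A4'), classical solutions of the semilinear Cauchy–Dirichlet
problem belonging to the class `C^{1+,0+}_{b,loc}` are unique. -/
theorem semilinear_exit_time_uniqueness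
    (T : ℝ) (hT : 0 < T) (σ β : ℝ → ℝ → ℝ) (H : ℝ → ℝ → ℝ → ℝ → ℝ)
    (hA1 : CondA1 T σ) (hA2 : CondA2 T β) (hA3 : CondA3 T H) (hA4 : CondA4' T σ)
    (u₁ u₂ : ℝ → ℝ → ℝ)
    (hreg₁ : RegC21 T u₁) (hreg₂ : RegC21 T u₂)
    (hpde₁ : ∀ x ∈ Ioi (0:ℝ), ∀ t ∈ Ico (0:ℝ) T,
      Dt u₁ x t + σ x t ^ 2 / 2 * Dxx u₁ x t + H (Dx u₁ x t) (u₁ x t) x t = 0)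
    (hpde₂ : ∀ x ∈ Ioi (0:ℝ), ∀ t ∈ Ico (0:ℝ) T,
      Dt u₂ x t + σ x t ^ 2 / 2 * Dxx u₂ x t + H (Dx u₂ x t) (u₂ x t) x t = 0)
    (hbd₁ : ∀ p ∈ parabBdry T, u₁ p.1 p.2 = β p.1 p.2)
    (hbd₂ : ∀ p ∈ parabBdry T, u₂ p.1 p.2 = β p.1 p.2)
    (hcls₁ : MemC1plus T u₁) (hcls₂ : MemC1plus T u₂) :
    ∀ x ∈ Ici (0:ℝ), ∀ t ∈ Icc (0:ℝ) T, u₁ x t = u₂ x t := by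
  obtain ⟨K, hK, hgrow, hlip⟩ := hA3.2
  obtain ⟨C₁, hC₁⟩ := hcls₁.1.2.1
  obtain ⟨C₂, hC₂⟩ := hcls₂.1.2.1
  have hC₁0 : 0 ≤ C₁ := le_trans (abs_nonneg _) (hC₁ 0 (mem_Ici.2 (le_refl 0)) 0 ⟨le_refl 0, hT⟩)
  have hC₂0 : 0 ≤ C₂ := le_trans (abs_nonneg _) (hC₂ 0 (mem_Ici.2 (le_refl 0)) 0 ⟨le_refl 0, hT⟩)
  have hM : ∀ x ∈ Ici (0:ℝ), ∀ t ∈ Icc (0:ℝ) T, |u₁ x t - u₂ x t| ≤ C₁ + C₂ := by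
    intro x hx t ht
    rcases eq_or_lt_of_le ht.2 with hTe | hlt
    · have hb : (x, t) ∈ parabBdry T := Or.inl ⟨hx, hTe⟩
      have h1 : u₁ x t = β x t := hbd₁ (x, t) hb
      have h2 : u₂ x t = β x t := hbd₂ (x, t) hb
      rw [h1, h2, sub_self, abs_zero]
      linarith
    · have b1 := hC₁ x hx t ⟨ht.1, hlt⟩
      have b2 := hC₂ x hx t ⟨ht.1, hlt⟩
      calc |u₁ x t - u₂ x t| ≤ |u₁ x t| + |u₂ x t| := abs_sub _ _
        _ ≤ C₁ + C₂ := add_le_add b1 b2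
  have hM' : ∀ x ∈ Ici (0:ℝ), ∀ t ∈ Icc (0:ℝ) T, |u₂ x t - u₁ x t| ≤ C₁ + C₂ := by
    intro x hx t ht
    rw [abs_sub_comm]
    exact hM x hx t ht
  have hzero12 : ∀ p ∈ parabBdry T, u₁ p.1 p.2 = u₂ p.1 p.2 :=
    fun p hp => (hbd₁ p hp).trans (hbd₂ p hp).symm
  have hzero21 : ∀ p ∈ parabBdry T, u₂ p.1 p.2 = u₁ p.1 p.2 :=
    fun p hp => (hbd₂ p hp).trans (hbd₁ p hp).symm
  have h12 := one_sided T hT σ H hK hlip u₁ u₂ hreg₁ hreg₂ hpde₁ hpde₂ hzero12 hM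
  have h21 := one_sided T hT σ H hK hlip u₂ u₁ hreg₂ hreg₁ hpde₂ hpde₁ hzero21 hM'
  intro x hx t ht
  exact le_antisymm (h12 x hx t ht) (h21 x hx t ht)
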